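/- Let C ⊆ [0,1] be a nowhere dense compact set with positive one-dimensional Lebesgue measure, let B ⊆ ℝ² be the closed unit ball centered at the origin, and set U = int(B) \ (C × [0,1]). Then U is open, path-connected, and simply connected. -/

import Mathlib

open MeasureTheory Metric Set

namespace Stmt9Aux

noncomputable def pt (a b : ℝ) : EuclideanSpace ℝ (Fin 2) :=
  (WithLp.equiv 2 (Fin 2 → ℝ)).symm ![a, b]

@[simp] lemma pt_apply0 (a b : ℝ) : pt a b 0 = a := by
  simp [pt, WithLp.equiv_symm_apply, PiLp.toLp_apply]

@[simp] lemma pt_apply1 (a b : ℝ) : pt a b 1 = b := by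
  simp [pt, WithLp.equiv_symm_apply, PiLp.toLp_apply]

lemma pt_eta (p : EuclideanSpace ℝ (Fin 2)) : pt (p 0) (p 1) = p := by
  ext i
  fin_cases i <;> simp

lemma continuous_pt {X : Type*} [TopologicalSpace X] {f h : X → ℝ}
    (hf : Continuous f) (hh : Continuous h) : Continuous fun x => pt (f x) (h x) := by
  have h1 : Continuous fun x => (![f x, h x] : Fin 2 → ℝ) := by
    apply continuous_pi
    intro i
    fin_cases i <;> simpa
  exact (PiLp.continuous_toLp (p := 2) (β := fun _ : Fin 2 => ℝ)).comp h1

lemma continuous_apply' (i : Fin 2) :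
    Continuous fun p : EuclideanSpace ℝ (Fin 2) => p i :=
  (EuclideanSpace.proj i : EuclideanSpace ℝ (Fin 2) →L[ℝ] ℝ).continuous

lemma mem_ball_iff (p : EuclideanSpace ℝ (Fin 2)) :
    p ∈ ball (0 : EuclideanSpace ℝ (Fin 2)) 1 ↔ (p 0) ^ 2 + (p 1) ^ 2 < 1 := by
  rw [mem_ball_zero_iff, EuclideanSpace.norm_eq, Fin.sum_univ_two,
    Real.sqrt_lt' one_pos]
  simp [sq_abs]

noncomputable def gg (x : ℝ) : ℝ := -(Real.sqrt (1 - x ^ 2) / 2)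

lemma gg_cont : Continuous gg := by
  unfold gg
  apply Continuous.neg
  apply Continuous.div_const
  exact Real.continuous_sqrt.comp (by continuity)

lemma gg_neg {x : ℝ} (hx : x ^ 2 < 1) : gg x < 0 := by
  have : 0 < Real.sqrt (1 - x ^ 2) := Real.sqrt_pos.2 (by linarith)
  unfold gg
  linarith

lemma gg_sq {x : ℝ} (hx : x ^ 2 ≤ 1) : (gg x) ^ 2 = (1 - x ^ 2) / 4 := by
  have : (gg x) ^ 2 = (Real.sqrt (1 - x ^ 2)) ^ 2 / 4 := by unfold gg; ring
  rw [this, Real.sq_sqrt (by linarith)]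

end Stmt9Aux

open Stmt9Aux

theorem stmt9 (C : Set ℝ) (hC1 : C ⊆ Icc 0 1) (hCn : IsNowhereDense C) (hCc : IsCompact C)
    (hCm : 0 < volume C) :
    IsOpen (ball (0 : EuclideanSpace ℝ (Fin 2)) 1 \ {p : EuclideanSpace ℝ (Fin 2) | p 0 ∈ C ∧ p 1 ∈ Icc 0 1}) ∧
    IsPathConnected (ball (0 : EuclideanSpace ℝ (Fin 2)) 1 \ {p : EuclideanSpace ℝ (Fin 2) | p 0 ∈ C ∧ p 1 ∈ Icc 0 1}) ∧
    SimplyConnectedSpace ((ball (0 : EuclideanSpace ℝ (Fin 2)) 1 \ {p : EuclideanSpace ℝ (Fin 2) | p 0 ∈ C ∧ p 1 ∈ Icc 0 1}) : Set (EuclideanSpace ℝ (Fin 2))) := by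
  set K : Set (EuclideanSpace ℝ (Fin 2)) :=
    {p : EuclideanSpace ℝ (Fin 2) | p 0 ∈ C ∧ p 1 ∈ Icc 0 1} with hK
  set U : Set (EuclideanSpace ℝ (Fin 2)) :=
    ball (0 : EuclideanSpace ℝ (Fin 2)) 1 \ K with hU
  -- K is closed
  have hKclosed : IsClosed K := by
    have : K = (fun p : EuclideanSpace ℝ (Fin 2) => p 0) ⁻¹' C ∩
        (fun p : EuclideanSpace ℝ (Fin 2) => p 1) ⁻¹' Icc 0 1 := rfl
    rw [this]
    exact (hCc.isClosed.preimage (continuous_apply' 0)).inter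
      (isClosed_Icc.preimage (continuous_apply' 1))
  have hUopen : IsOpen U := isOpen_ball.sdiff hKclosed
  -- membership characterization
  have hmem : ∀ p : EuclideanSpace ℝ (Fin 2),
      p ∈ U ↔ ((p 0) ^ 2 + (p 1) ^ 2 < 1 ∧ (p 0 ∈ C → p 1 < 0)) := by
    intro p
    rw [hU, mem_diff, mem_ball_iff]
    constructor
    · rintro ⟨h1, h2⟩
      refine ⟨h1, fun hc => ?_⟩
      by_contra hy
      push_neg at hy
      exact h2 ⟨hc, hy, by nlinarith [sq_nonneg (p 0), sq_nonneg (p 1 - 1)]⟩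
    · rintro ⟨h1, h2⟩
      refine ⟨h1, fun hk => ?_⟩
      have := h2 hk.1
      linarith [hk.2.1]
  -- the auxiliary function
  have hgcont : Continuous gg := gg_cont
  have hgneg : ∀ x : ℝ, x ^ 2 < 1 → gg x < 0 := fun x hx => gg_neg hx
  have hgsq : ∀ x : ℝ, x ^ 2 ≤ 1 → (gg x) ^ 2 = (1 - x ^ 2) / 4 := fun x hx => gg_sq hx
  -- the retract point r p and center c are in U
  have hr : ∀ p : EuclideanSpace ℝ (Fin 2), p ∈ U → pt (p 0) (gg (p 0)) ∈ U := by
    intro p hp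
    rw [hmem] at hp ⊢
    have hx2 : (p 0) ^ 2 < 1 := by nlinarith [sq_nonneg (p 1)]
    constructor
    · simp only [pt_apply0, pt_apply1]
      rw [hgsq _ hx2.le]
      nlinarith
    · intro _
      simpa using hgneg _ hx2
  have hcU : pt 0 (-(1/2)) ∈ U := by
    rw [hmem]
    norm_num
  -- convexity of the ball transported to U-membership when second point has matching data
  have hconv : Convex ℝ (ball (0 : EuclideanSpace ℝ (Fin 2)) 1) := convex_ball _ _
  -- the homotopy map on ℝ × total space
  set Φ : ℝ → EuclideanSpace ℝ (Fin 2) → EuclideanSpace ℝ (Fin 2) := fun t p =>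
    if t ≤ 1/2 then pt (p 0) ((1 - 2*t) * (p 1) + (2*t) * gg (p 0))
    else pt ((2 - 2*t) * (p 0)) ((2 - 2*t) * gg (p 0) + (2*t - 1) * (-(1/2))) with hΦ
  have hΦcont : Continuous fun q : ℝ × EuclideanSpace ℝ (Fin 2) => Φ q.1 q.2 := by
    apply Continuous.if_le
    · apply continuous_pt
      · exact (continuous_apply' 0).comp continuous_snd
      · fun_prop (disch := exact hgcont)
    · apply continuous_pt <;>
        fun_prop (disch := exact hgcont)
    · exact continuous_fst
    · exact continuous_const
    · rintro ⟨t, p⟩ ht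
      simp only at ht
      subst ht
      norm_num
  -- membership preservation
  have hΦmem : ∀ t : ℝ, t ∈ Icc (0:ℝ) 1 → ∀ p : EuclideanSpace ℝ (Fin 2), p ∈ U →
      Φ t p ∈ U := by
    rintro t ⟨ht0, ht1⟩ p hp
    have hpU := hp
    rw [hmem] at hpU
    obtain ⟨hpb, hpC⟩ := hpU
    have hx2 : (p 0) ^ 2 < 1 := by nlinarith [sq_nonneg (p 1)]
    have hrp := hr p hp
    simp only [hΦ]
    by_cases hcase : t ≤ 1/2
    · rw [if_pos hcase]
      set s : ℝ := 2 * t with hs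
      have hs0 : 0 ≤ s := by positivity
      have hs1 : s ≤ 1 := by simp [hs]; linarith
      -- equals (1-s) • p + s • r
      have heq : pt (p 0) ((1 - s) * (p 1) + s * gg (p 0)) =
          (1 - s) • p + s • (pt (p 0) (gg (p 0))) := by
        ext i
        fin_cases i <;>
          · simp only [Fin.isValue, Fin.mk_zero, Fin.mk_one, PiLp.add_apply, PiLp.smul_apply,
              smul_eq_mul, pt_apply0, pt_apply1]
            try ring
      rw [show (1 - 2*t) * (p 1) + (2*t) * gg (p 0)
            = (1 - s) * (p 1) + s * gg (p 0) by rw [hs]]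
      clear_value s
      rw [heq, hmem]
      constructor
      · have hball : (1 - s) • p + s • (pt (p 0) (gg (p 0))) ∈
            ball (0 : EuclideanSpace ℝ (Fin 2)) 1 := by
          apply hconv hp.1 hrp.1 (by linarith) hs0 (by ring)
        rw [mem_ball_iff] at hball
        exact hball
      · intro hc
        have h0 : ((1 - s) • p + s • (pt (p 0) (gg (p 0)))) 0 = p 0 := by
          simp [PiLp.add_apply, PiLp.smul_apply, smul_eq_mul]; ring
        rw [h0] at hc
        have hy : p 1 < 0 := hpC hc
        have hgx : gg (p 0) < 0 := hgneg _ hx2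
        have h1 : ((1 - s) • p + s • (pt (p 0) (gg (p 0)))) 1
            = (1 - s) * (p 1) + s * gg (p 0) := by
          simp [PiLp.add_apply, PiLp.smul_apply, smul_eq_mul]
        rw [h1]
        have h2 : (1 - s) * (p 1) ≤ 0 := mul_nonpos_of_nonneg_of_nonpos (by linarith) hy.le
        rcases eq_or_lt_of_le hs0 with h | h
        · rw [← h]; simpa using hy
        · nlinarith
    · rw [if_neg hcase]
      push_neg at hcase
      set s : ℝ := 2 * t - 1 with hs
      have hs0 : 0 ≤ s := by simp [hs]; linarith
      have hs1 : s ≤ 1 := by simp [hs]; linarith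
      have heq : pt ((2 - 2*t) * (p 0)) ((2 - 2*t) * gg (p 0) + s * (-(1/2))) =
          (1 - s) • (pt (p 0) (gg (p 0))) + s • (pt 0 (-(1/2))) := by
        ext i
        fin_cases i <;>
          · simp only [Fin.isValue, Fin.mk_zero, Fin.mk_one, PiLp.add_apply, PiLp.smul_apply,
              smul_eq_mul, pt_apply0, pt_apply1, hs]
            try ring
      clear_value s
      rw [heq, hmem]
      have hgx : gg (p 0) < 0 := hgneg _ hx2
      constructor
      · have hball : (1 - s) • (pt (p 0) (gg (p 0))) + s • (pt 0 (-(1/2))) ∈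
            ball (0 : EuclideanSpace ℝ (Fin 2)) 1 := by
          apply hconv hrp.1 hcU.1 (by linarith) hs0 (by ring)
        rw [mem_ball_iff] at hball
        exact hball
      · intro _
        have h1 : ((1 - s) • (pt (p 0) (gg (p 0))) + s • (pt 0 (-(1/2)))) 1
            = (1 - s) * gg (p 0) + s * (-(1/2)) := by
          simp [PiLp.add_apply, PiLp.smul_apply, smul_eq_mul]
        rw [h1]
        have h2 : (1 - s) * gg (p 0) ≤ 0 := mul_nonpos_of_nonneg_of_nonpos (by linarith) hgx.le
        rcases eq_or_lt_of_le hs0 with h | h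
        · rw [← h]; simpa using hgx
        · have h3 : s * (-(1/2) : ℝ) < 0 := by nlinarith
          linarith
  -- build the contraction
  have hcontr : ContractibleSpace U := by
    rw [contractible_iff_id_nullhomotopic]
    refine ⟨⟨pt 0 (-(1/2)), hcU⟩, ⟨?_⟩⟩
    refine ContinuousMap.Homotopy.mk
      ⟨fun q : unitInterval × U => ⟨Φ q.1 q.2.1,
        hΦmem q.1 q.1.2 q.2.1 q.2.2⟩, ?_⟩ ?_ ?_
    · apply Continuous.subtype_mk
      have hc2 : Continuous fun x : unitInterval × U =>
          ((x.1 : ℝ), (x.2 : EuclideanSpace ℝ (Fin 2))) :=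
        (continuous_subtype_val.comp continuous_fst).prodMk
          (continuous_subtype_val.comp continuous_snd)
      exact hΦcont.comp hc2
    · intro x
      apply Subtype.ext
      show Φ 0 x.1 = x.1
      simp only [hΦ]
      norm_num
      rw [← pt_eta x.1]
      norm_num
    · intro x
      apply Subtype.ext
      show Φ 1 x.1 = pt 0 (-(1/2))
      simp only [hΦ]
      norm_num
  haveI := hcontr
  exact ⟨hUopen, isPathConnected_iff_pathConnectedSpace.2 inferInstance, inferInstance⟩
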